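/- Let ε > 0 and let K ⊆ ℝ² be a compact convex set with B(ε) ⊆ K such that a ball of radius ε slides freely inside K. Let u ∈ ℝ² be a unit vector and let x ∈ ℝ² satisfy ⟨x,u⟩ = 0 and ‖x‖ ≤ 2ε. Let S ⊆ ℝ² be a finite set with 0 ∈ S and x ∈ S. Writing K_u⁺ = {y ∈ K : ⟨y,u⟩ ≥ 0}, B(ε)_u⁺ = {y ∈ B(ε) : ⟨y,u⟩ ≥ 0}, and [0,x] for the closed segment from 0 to x, one has V₂(([0,x] ⊕ K_u⁺) \ (S ⊕ K)) ≤ V₂(([0,x] ⊕ B(ε)_u⁺) \ (S ⊕ B(ε))). -/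

import Mathlib

open Pointwise MeasureTheory Metric

noncomputable section

/-- The plane `ℝ²`. -/
abbrev E2 := EuclideanSpace ℝ (Fin 2)

/-- `V₂`: Lebesgue measure (area) of a subset of `ℝ²`, as a real number. -/
def V2 (A : Set E2) : ℝ := (volume A).toReal

/-- A ball of radius `ε` slides freely inside `K` if every boundary point of `K`
is contained in a closed ball of radius `ε` that is contained in `K`. -/
def SlidesFreely (ε : ℝ) (K : Set E2) : Prop :=
  ∀ x ∈ frontier K, ∃ c : E2, x ∈ closedBall c ε ∧ closedBall c ε ⊆ K

lemma coord_decomp (u w q : E2) (hu : ‖u‖ = 1) (hw : ‖w‖ = 1) (huw : (inner ℝ u w : ℝ) = 0) :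
    q = (inner ℝ q w : ℝ) • w + (inner ℝ q u : ℝ) • u := by
  have hu2 : u 0 * u 0 + u 1 * u 1 = 1 := by
    have := real_inner_self_eq_norm_mul_norm u
    rw [hu] at this
    simp only [PiLp.inner_apply, Fin.sum_univ_two, RCLike.inner_apply, conj_trivial] at this
    linarith
  have hw2 : w 0 * w 0 + w 1 * w 1 = 1 := by
    have := real_inner_self_eq_norm_mul_norm w
    rw [hw] at this
    simp only [PiLp.inner_apply, Fin.sum_univ_two, RCLike.inner_apply, conj_trivial] at this
    linarith
  have huw2 : u 0 * w 0 + u 1 * w 1 = 0 := by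
    have := huw
    simp only [PiLp.inner_apply, Fin.sum_univ_two, RCLike.inner_apply, conj_trivial] at this
    linear_combination this
  have hd : (u 0 * w 1 - u 1 * w 0) ^ 2 = 1 := by
    linear_combination (w 0 * w 0 + w 1 * w 1) * hu2 + hw2 - (u 0 * w 0 + u 1 * w 1) * huw2
  have key1 : w 0 * w 0 + u 0 * u 0 = 1 := by
    linear_combination hd - w 0 * w 0 * hu2 - u 0 * u 0 * hw2 + 2 * u 0 * w 0 * huw2
  have key3 : w 1 * w 1 + u 1 * u 1 = 1 := by
    linear_combination hd - w 1 * w 1 * hu2 - u 1 * u 1 * hw2 + 2 * u 1 * w 1 * huw2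
  have key2 : w 0 * w 1 + u 0 * u 1 = 0 := by
    linear_combination (-(w 0 * w 1)) * hu2 - u 0 * u 1 * hw2 + (u 0 * w 1 + u 1 * w 0) * huw2
  have h0 : q 0 = (q 0 * w 0 + q 1 * w 1) * w 0 + (q 0 * u 0 + q 1 * u 1) * u 0 := by
    linear_combination (-(q 0)) * key1 - q 1 * key2
  have h1 : q 1 = (q 0 * w 0 + q 1 * w 1) * w 1 + (q 0 * u 0 + q 1 * u 1) * u 1 := by
    linear_combination (-(q 1)) * key3 - q 0 * key2
  ext i
  simp only [PiLp.inner_apply, PiLp.add_apply, PiLp.smul_apply, Fin.sum_univ_two,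
    smul_eq_mul, RCLike.inner_apply, conj_trivial]
  fin_cases i
  · change q 0 = (w 0 * q 0 + w 1 * q 1) * w 0 + (u 0 * q 0 + u 1 * q 1) * u 0
    linear_combination h0
  · change q 1 = (w 0 * q 0 + w 1 * q 1) * w 1 + (u 0 * q 0 + u 1 * q 1) * u 1
    linear_combination h1

lemma mem_of_between {K : Set E2} (hK : Convex ℝ K) {u w : E2} {η a₁ a₂ a : ℝ}
    (h1 : a₁ • w + η • u ∈ K) (h2 : a₂ • w + η • u ∈ K) (ha1 : a₁ ≤ a) (ha2 : a ≤ a₂) :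
    a • w + η • u ∈ K := by
  rcases eq_or_lt_of_le (ha1.trans ha2) with h | h
  · have : a = a₁ := le_antisymm (h ▸ ha2) ha1
    rwa [this]
  · have hne : a₂ - a₁ > 0 := by linarith
    set θ := (a - a₁) / (a₂ - a₁) with hθ
    have hθ0 : 0 ≤ θ := div_nonneg (by linarith) hne.le
    have hθ1 : θ ≤ 1 := by
      rw [div_le_one hne]; linarith
    have := hK h1 h2 (by linarith : (0:ℝ) ≤ 1 - θ) hθ0 (by ring)
    have heq : (1 - θ) • (a₁ • w + η • u) + θ • (a₂ • w + η • u) = a • w + η • u := by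
      have haa : (1 - θ) * a₁ + θ * a₂ = a := by
        have hθm : θ * (a₂ - a₁) = a - a₁ := by rw [hθ]; exact div_mul_cancel₀ _ hne.ne'
        linear_combination hθm
      rw [← haa]; module
    rwa [heq] at this


set_option maxHeartbeats 1000000

/-- The face-wise volume comparison from the proof of Lemma 1:
`V₂(([0,x] ⊕ K_u⁺) \ (S ⊕ K)) ≤ V₂(([0,x] ⊕ B(ε)_u⁺) \ (S ⊕ B(ε)))`. -/
theorem stmt_2 (ε : ℝ) (hε : 0 < ε)
    (K : Set E2) (hKcomp : IsCompact K) (hKconv : Convex ℝ K)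
    (hball : closedBall (0 : E2) ε ⊆ K) (hKslide : SlidesFreely ε K)
    (u : E2) (hu : ‖u‖ = 1)
    (x : E2) (hxu : (inner ℝ x u : ℝ) = 0) (hx : ‖x‖ ≤ 2 * ε)
    (S : Set E2) (hSfin : S.Finite) (h0S : (0 : E2) ∈ S) (hxS : x ∈ S) :
    V2 ((segment ℝ (0 : E2) x + {y ∈ K | (inner ℝ y u : ℝ) ≥ 0}) \ (S + K)) ≤
      V2 ((segment ℝ (0 : E2) x + {y ∈ closedBall (0 : E2) ε | (inner ℝ y u : ℝ) ≥ 0}) \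
        (S + closedBall (0 : E2) ε)) := by
  -- 0 ∈ K
  have h0K : (0 : E2) ∈ K := hball (mem_closedBall_self hε.le)
  -- maximizer of ⟨·,u⟩ on K
  obtain ⟨m, hmK, hm⟩ := hKcomp.exists_isMaxOn ⟨0, h0K⟩
    ((continuous_id.inner continuous_const).continuousOn :
      ContinuousOn (fun y : E2 => (inner ℝ y u : ℝ)) K)
  set h : ℝ := (inner ℝ m u : ℝ) with hh
  clear_value h
  have hmle : ∀ y ∈ K, (inner ℝ y u : ℝ) ≤ h := fun y hy => by
    have := hm hy; simpa [hh] using this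
  have hεu : ε • u ∈ K := by
    apply hball
    simp [mem_closedBall, dist_eq_norm, norm_smul, hu, abs_of_nonneg hε.le]
  have hεh : ε ≤ h := by
    have := hmle _ hεu
    rwa [real_inner_smul_left, real_inner_self_eq_norm_mul_norm, hu, one_mul, mul_one] at this
  -- m is on the frontier
  have hmfr : m ∈ frontier K := by
    rw [frontier, IsClosed.closure_eq hKcomp.isClosed]
    refine ⟨hmK, fun hint => ?_⟩
    rw [mem_interior_iff_mem_nhds, Metric.mem_nhds_iff] at hint
    obtain ⟨r, hr, hrK⟩ := hint
    have : m + (r/2) • u ∈ K := hrK (by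
      rw [mem_ball, dist_eq_norm, add_sub_cancel_left, norm_smul, hu, mul_one,
        Real.norm_eq_abs, abs_of_pos (half_pos hr)]
      linarith)
    have := hmle _ this
    rw [inner_add_left, real_inner_smul_left, real_inner_self_eq_norm_mul_norm, hu,
      one_mul, mul_one, ← hh] at this
    linarith
  -- the sliding ball at m has center c = m - ε•u
  obtain ⟨c, hmc, hcK⟩ := hKslide m hmfr
  have hceq : c = m - ε • u := by
    have h1 : (inner ℝ c u : ℝ) + ε ≤ h := by
      have : c + ε • u ∈ K := hcK (by
        simp [mem_closedBall, dist_eq_norm, norm_smul, hu, abs_of_nonneg hε.le])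
      have := hmle _ this
      rwa [inner_add_left, real_inner_smul_left, real_inner_self_eq_norm_mul_norm, hu,
        one_mul, mul_one] at this
    have h2 : ‖m - c‖ ≤ ε := by rwa [mem_closedBall, dist_eq_norm] at hmc
    have h3 : ε ≤ (inner ℝ (m - c) u : ℝ) := by
      rw [inner_sub_left]; linarith
    have h4 : (inner ℝ (m - c) u : ℝ) ≤ ε := by
      calc (inner ℝ (m - c) u : ℝ) ≤ ‖m - c‖ * ‖u‖ := real_inner_le_norm _ _
        _ ≤ ε := by rw [hu, mul_one]; exact h2
    have h5 : (inner ℝ (m - c) u : ℝ) = ε := le_antisymm h4 h3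
    have h6 : ‖m - c‖ = ε := le_antisymm h2 (by
      calc ε = (inner ℝ (m - c) u : ℝ) := h5.symm
        _ ≤ ‖m - c‖ * ‖u‖ := real_inner_le_norm _ _
        _ = ‖m - c‖ := by rw [hu, mul_one])
    have h7 : ‖(m - c) - ε • u‖ ^ 2 = 0 := by
      rw [norm_sub_sq_real, real_inner_smul_right, h5, norm_smul, h6, hu,
        Real.norm_eq_abs, abs_of_nonneg hε.le]
      ring
    have h8 : m - c - ε • u = 0 := by
      rw [pow_eq_zero_iff (by norm_num)] at h7
      exact norm_eq_zero.mp h7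
    have : m - c = ε • u := by linear_combination (norm := module) h8
    linear_combination (norm := module) -this
  have hcu : (inner ℝ c u : ℝ) = h - ε := by
    rw [hceq, inner_sub_left, real_inner_smul_left, real_inner_self_eq_norm_mul_norm, hu, hh]
    ring
  -- case x = 0
  rcases eq_or_ne x 0 with hx0 | hx0
  · have hempty : (segment ℝ (0 : E2) x + {y ∈ K | (inner ℝ y u : ℝ) ≥ 0}) \ (S + K) = ∅ := by
      subst hx0
      rw [Set.eq_empty_iff_forall_notMem]
      rintro p ⟨hp1, hp2⟩
      rw [Set.mem_add] at hp1
      obtain ⟨z, hz, y, hy, rfl⟩ := hp1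
      rw [segment_same, Set.mem_singleton_iff] at hz
      subst hz
      exact hp2 (Set.mem_add.mpr ⟨0, h0S, y, hy.1, rfl⟩)
    rw [hempty]
    simp only [V2, measure_empty, ENNReal.toReal_zero]
    exact ENNReal.toReal_nonneg
  -- main case
  set s : ℝ := ‖x‖ with hsdef
  clear_value s
  have hs : 0 < s := hsdef ▸ norm_pos_iff.mpr hx0
  have hs2 : s ≤ 2 * ε := hx
  set w : E2 := s⁻¹ • x with hwdef
  clear_value w
  have hw : ‖w‖ = 1 := by
    rw [hwdef, norm_smul, Real.norm_eq_abs, abs_of_pos (inv_pos.mpr hs), ← hsdef,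
      inv_mul_cancel₀ hs.ne']
  have hxw : x = s • w := by rw [hwdef, smul_smul, mul_inv_cancel₀ hs.ne', one_smul]
  have huw : (inner ℝ u w : ℝ) = 0 := by
    rw [hwdef, real_inner_smul_right, real_inner_comm, hxu, mul_zero]
  have hxwc : (inner ℝ x w : ℝ) = s := by
    nth_rewrite 1 [hxw]
    rw [real_inner_smul_left, real_inner_self_eq_norm_mul_norm, hw, one_mul, mul_one]
  set cw : ℝ := (inner ℝ c w : ℝ) with hcwdef
  clear_value cw
  have hccoord : c = cw • w + (h - ε) • u := by
    have := coord_decomp u w c hu hw huw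
    rwa [hcu, ← hcwdef] at this
  -- core pointwise claim
  have hmain : ∀ p ∈ (segment ℝ (0 : E2) x + {y ∈ K | (inner ℝ y u : ℝ) ≥ 0}) \ (S + K),
      -c + p ∈ (segment ℝ (0 : E2) x + {y ∈ closedBall (0 : E2) ε | (inner ℝ y u : ℝ) ≥ 0}) \
        (S + closedBall (0 : E2) ε) := by
    rintro p ⟨hpG, hpS⟩
    rw [Set.mem_add] at hpG
    obtain ⟨z, hz, y, ⟨hyK, hyu⟩, rfl⟩ := hpG
    rw [segment_eq_image] at hz
    obtain ⟨t, ht, hzt⟩ := hz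
    have hz' : z = t • x := by rw [← hzt]; simp
    subst hz'
    set p : E2 := t • x + y with hpdef
    clear_value p
    set ξ : ℝ := (inner ℝ p w : ℝ) with hξdef
    clear_value ξ
    set η : ℝ := (inner ℝ p u : ℝ) with hηdef
    clear_value η
    have hpcoord : p = ξ • w + η • u := by rw [hξdef, hηdef]; exact coord_decomp u w p hu hw huw
    have hηy : (inner ℝ y u : ℝ) = η := by
      rw [hηdef, hpdef, inner_add_left, real_inner_smul_left, hxu, mul_zero, zero_add]
    have hη0 : 0 ≤ η := hηy ▸ hyu
    have hηh : η ≤ h := hηy ▸ hmle y hyK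
    have hyw : (inner ℝ y w : ℝ) = ξ - t * s := by
      have : ξ = t * s + (inner ℝ y w : ℝ) := by
        rw [hξdef, hpdef, inner_add_left, real_inner_smul_left, hxwc]
      linarith
    have hycoord : y = (ξ - t * s) • w + η • u := by
      have := coord_decomp u w y hu hw huw
      rwa [hyw, hηy] at this
    have hpK : p ∉ K := fun hk => hpS (Set.mem_add.mpr ⟨0, h0S, p, hk, zero_add p⟩)
    have hpxK : p - x ∉ K := fun hk =>
      hpS (Set.mem_add.mpr ⟨x, hxS, p - x, hk, add_sub_cancel x p⟩)
    have hts0 : 0 ≤ t * s := mul_nonneg ht.1 hs.le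
    have hts1 : t * s ≤ s := by nlinarith [ht.1, ht.2, hs.le]
    have hpx : p - x = (ξ - s) • w + η • u := by
      rw [hpcoord, hxw]; module
    -- step (i)
    have hstep1 : h - ε ≤ η := by
      by_contra hlt
      push_neg at hlt
      have hhe : 0 < h - ε := lt_of_le_of_lt hη0 hlt
      set lam : ℝ := η / (h - ε) with hlamdef
      clear_value lam
      have hlam0 : 0 ≤ lam := by rw [hlamdef]; exact div_nonneg hη0 hhe.le
      have hlam1 : lam ≤ 1 := by rw [hlamdef, div_le_one hhe]; linarith
      have hlamη : lam * (h - ε) = η := by rw [hlamdef]; exact div_mul_cancel₀ η hhe.ne'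
      have hQ : ∀ β : ℝ, |β| ≤ ε → (lam * cw + β) • w + η • u ∈ K := by
        intro β hβ
        have hq1 : β • w ∈ K := hball (by
          rw [mem_closedBall, dist_zero_right, norm_smul, hw, mul_one, Real.norm_eq_abs]
          exact hβ)
        have hq2 : c + β • w ∈ K := hcK (by
          rw [mem_closedBall, dist_eq_norm, add_sub_cancel_left, norm_smul, hw, mul_one,
            Real.norm_eq_abs]
          exact hβ)
        have hmem := hKconv hq1 hq2 (sub_nonneg.mpr hlam1) hlam0 (by ring)
        have heq : (1 - lam) • (β • w) + lam • (c + β • w) = (lam * cw + β) • w + η • u := by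
          rw [hccoord, ← hlamη]; module
        rwa [heq] at hmem
      by_cases hcase : ξ ≤ lam * cw + ε
      · exact hpK (hpcoord ▸ mem_of_between hKconv (hycoord ▸ hyK)
          (hQ ε (by rw [abs_of_nonneg hε.le])) (by linarith) hcase)
      · push_neg at hcase
        exact hpxK (hpx ▸ mem_of_between hKconv
          (hQ (-ε) (by rw [abs_neg, abs_of_nonneg hε.le]))
          (hycoord ▸ hyK) (by linarith) (by linarith))
    -- step (ii)
    set δ : ℝ := h - η with hδdef
    clear_value δ
    have hδ0 : 0 ≤ δ := by rw [hδdef]; linarith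
    have hδε : δ ≤ ε := by rw [hδdef]; linarith
    set ω : ℝ := Real.sqrt (ε ^ 2 - (ε - δ) ^ 2) with hωdef
    clear_value ω
    have hω0 : 0 ≤ ω := by rw [hωdef]; exact Real.sqrt_nonneg _
    have hω2 : ω ^ 2 = ε ^ 2 - (ε - δ) ^ 2 := by rw [hωdef]; exact Real.sq_sqrt (by nlinarith)
    have hωε : ω ≤ ε := by nlinarith
    have hηwhite : η = (h - ε) + (ε - δ) := by rw [hδdef]; ring
    have hwu : (inner ℝ w u : ℝ) = 0 := by rw [real_inner_comm]; exact huw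
    have hR : ∀ β : ℝ, |β| ≤ ω → (cw + β) • w + η • u ∈ K := by
      intro β hβ
      have hβ2 : β ^ 2 ≤ ω ^ 2 := by
        rw [← sq_abs]; exact pow_le_pow_left₀ (abs_nonneg β) hβ 2
      have hnorm : ‖β • w + (ε - δ) • u‖ ^ 2 ≤ ε ^ 2 := by
        rw [norm_add_sq_real, norm_smul, norm_smul, hw, hu, mul_one, mul_one,
          real_inner_smul_left, real_inner_smul_right]
        simp only [Real.norm_eq_abs, hwu, mul_zero, sq_abs]
        nlinarith
      have hmem : c + (β • w + (ε - δ) • u) ∈ K := hcK (by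
        rw [mem_closedBall, dist_eq_norm, add_sub_cancel_left]
        nlinarith [norm_nonneg (β • w + (ε - δ) • u)])
      have heq : c + (β • w + (ε - δ) • u) = (cw + β) • w + η • u := by
        rw [hccoord, hηwhite]; module
      rwa [heq] at hmem
    have hωabs : |ω| ≤ ω := by rw [abs_of_nonneg hω0]
    have hωabs' : |(-ω)| ≤ ω := by rw [abs_neg, abs_of_nonneg hω0]
    have hb1 : cw + ω < ξ := by
      by_contra hcon
      push_neg at hcon
      rcases le_or_gt (cw - ω) ξ with hge | hlt2
      · exact hpK (hpcoord ▸ mem_of_between hKconv (hR (-ω) hωabs') (hR ω hωabs)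
          (by linarith) hcon)
      · exact hpK (hpcoord ▸ mem_of_between hKconv (hycoord ▸ hyK) (hR (-ω) hωabs')
          (by linarith) (by linarith))
    have hb2 : ξ - s < cw - ω := by
      by_contra hcon
      push_neg at hcon
      rcases le_or_gt (ξ - s) (cw + ω) with hle2 | hgt2
      · exact hpxK (hpx ▸ mem_of_between hKconv (hR (-ω) hωabs') (hR ω hωabs) hcon hle2)
      · exact hpxK (hpx ▸ mem_of_between hKconv (hR ω hωabs) (hycoord ▸ hyK) hgt2.le
          (by linarith))
    constructor
    · rw [Set.mem_add]
      refine ⟨((ξ - cw) / s) • x, ?_, (ε - δ) • u, ⟨?_, ?_⟩, ?_⟩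
      · rw [segment_eq_image]
        refine ⟨(ξ - cw) / s, ⟨div_nonneg (by linarith) hs.le, ?_⟩, by simp⟩
        rw [div_le_one hs]; linarith
      · rw [mem_closedBall, dist_zero_right, norm_smul, hu, mul_one, Real.norm_eq_abs,
          abs_of_nonneg (by linarith : (0:ℝ) ≤ ε - δ)]
        linarith
      · rw [real_inner_smul_left, real_inner_self_eq_norm_mul_norm, hu, one_mul, mul_one]
        linarith
      · have hdiv : (ξ - cw) / s * s = ξ - cw := div_mul_cancel₀ _ hs.ne'
        rw [hpcoord, hccoord, hηwhite, hxw, smul_smul, hdiv]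
        module
    · intro hcon
      rw [Set.mem_add] at hcon
      obtain ⟨v, hvS, b, hb, hvb⟩ := hcon
      apply hpS
      rw [Set.mem_add]
      refine ⟨v, hvS, c + b, hcK (by
        rw [mem_closedBall, dist_eq_norm, add_sub_cancel_left]
        rwa [mem_closedBall, dist_zero_right] at hb), ?_⟩
      have : v + b = -c + p := hvb
      linear_combination (norm := module) this
  -- endgame
  have hsub : (segment ℝ (0 : E2) x + {y ∈ K | (inner ℝ y u : ℝ) ≥ 0}) \ (S + K) ⊆
      (fun q : E2 => -c + q) ⁻¹'
        ((segment ℝ (0 : E2) x + {y ∈ closedBall (0 : E2) ε | (inner ℝ y u : ℝ) ≥ 0}) \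
          (S + closedBall (0 : E2) ε)) := fun p hp => hmain p hp
  have hmono := measure_mono (μ := (volume : Measure E2)) hsub
  rw [measure_preimage_add] at hmono
  have hbd : (segment ℝ (0 : E2) x + {y ∈ closedBall (0 : E2) ε | (inner ℝ y u : ℝ) ≥ 0}) \
      (S + closedBall (0 : E2) ε) ⊆ closedBall (0 : E2) (s + ε) := by
    rintro q ⟨hq1, _⟩
    rw [Set.mem_add] at hq1
    obtain ⟨z, hz, b, hb, rfl⟩ := hq1
    rw [segment_eq_image] at hz
    obtain ⟨t, ht, rfl⟩ := hz
    rw [mem_closedBall, dist_zero_right]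
    simp only [smul_zero, zero_add]
    have hbe : ‖b‖ ≤ ε := by
      have := hb.1
      rwa [mem_closedBall, dist_zero_right] at this
    calc ‖t • x + b‖ ≤ ‖t • x‖ + ‖b‖ := norm_add_le _ _
      _ ≤ s + ε := by
        rw [norm_smul, Real.norm_eq_abs, abs_of_nonneg ht.1, ← hsdef]
        nlinarith [ht.2, hs.le]
  have hfin : volume ((segment ℝ (0 : E2) x + {y ∈ closedBall (0 : E2) ε |
      (inner ℝ y u : ℝ) ≥ 0}) \ (S + closedBall (0 : E2) ε)) ≠ ⊤ :=
    ((measure_mono hbd).trans_lt measure_closedBall_lt_top).ne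
  exact ENNReal.toReal_mono hfin hmono


end
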